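/- Let C > 0, c > 0, δ > 0 and N ∈ ℝ, and let R be a positive random variable with P(R > x) = C·x^N·exp(−c·x^δ) for all sufficiently large x. Let Θ be uniformly distributed on (−π,π), independent of R, and set X := R cos Θ. Then P(X > u) = (1+o(1))·(C/√(2·c·δ·π))·u^{N−δ/2}·exp(−c·u^δ) as u → ∞; that is, lim_{u→∞} P(X > u)·√(2cδπ)·u^{δ/2−N}·exp(c·u^δ)/C = 1. -/

import Mathlib

open MeasureTheory Filter

section helpers
open Real


lemma key_bound {c δ N : ℝ} (hc : 0 < c) (hδ : 0 < δ) {θ v : ℝ}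
    (hθ : θ ∈ Set.Ioo (-(π/2)) (π/2))
    (hv : 2 * max (N/δ) 0 ≤ c * v) :
    cos θ ^ (-N) * Real.exp (-(c * v) * (cos θ ^ (-δ) - 1)) ≤
      Real.exp (-(c * δ / π ^ 2) * (v * θ ^ 2)) := by
  have hcos : 0 < cos θ := Real.cos_pos_of_mem_Ioo (by simpa using hθ)
  have hcos1 : cos θ ≤ 1 := Real.cos_le_one θ
  set t : ℝ := -δ * Real.log (cos θ) with ht
  have hlogle : Real.log (cos θ) ≤ 0 := Real.log_nonpos hcos.le hcos1
  have htnn : 0 ≤ t := by nlinarith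
  have hN : cos θ ^ (-N) = Real.exp ((N/δ) * t) := by
    rw [Real.rpow_def_of_pos hcos]
    congr 1
    field_simp [ht]
    ring
  have hδe : cos θ ^ (-δ) = Real.exp t := by
    rw [Real.rpow_def_of_pos hcos]
    congr 1
    rw [ht]; ring
  set A : ℝ := Real.exp t - 1 with hA
  have hAt : t ≤ A := by
    have := Real.add_one_le_exp t
    simp [hA]; linarith
  have hAnn : 0 ≤ A := le_trans htnn hAt
  have hvnn : 0 ≤ v := by
    have h0 : (0:ℝ) ≤ 2 * max (N/δ) 0 := by positivity
    nlinarith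
  -- step 1 : (N/δ) * t ≤ (c*v/2) * A
  have hp : N/δ ≤ max (N/δ) 0 := le_max_left _ _
  have step1 : (N/δ) * t ≤ (c*v/2) * A := by
    calc (N/δ) * t ≤ max (N/δ) 0 * t := by nlinarith
      _ ≤ max (N/δ) 0 * A := by nlinarith [le_max_right (N/δ) (0:ℝ)]
      _ ≤ (c*v/2) * A := by nlinarith [le_max_right (N/δ) (0:ℝ)]
  -- step 2 : A ≥ 2*δ*θ^2/π^2
  have hcosub : cos θ ≤ 1 - 2/π^2 * θ^2 := by
    apply Real.cos_le_one_sub_mul_cos_sq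
    have hpi2 : π/2 ≤ π := by nlinarith [Real.pi_pos]
    rw [abs_le]
    constructor <;> nlinarith [hθ.1, hθ.2, Real.pi_pos]
  have hlog : Real.log (cos θ) ≤ cos θ - 1 := by
    have := Real.log_le_sub_one_of_pos hcos
    linarith
  have step2 : 2*δ/π^2 * θ^2 ≤ A := by
    have h1 : δ * (1 - cos θ) ≤ t := by
      rw [ht]; nlinarith
    have h2 : 2/π^2 * θ^2 ≤ 1 - cos θ := by linarith
    calc 2*δ/π^2 * θ^2 = δ * (2/π^2 * θ^2) := by ring
      _ ≤ δ * (1 - cos θ) := mul_le_mul_of_nonneg_left h2 hδ.le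
      _ ≤ t := h1
      _ ≤ A := hAt
  rw [hN, hδe, ← hA, ← Real.exp_add]
  apply Real.exp_le_exp.2
  have hfin : (c*v/2) * (2*δ/π^2*θ^2) ≤ (c*v/2) * A :=
    mul_le_mul_of_nonneg_left step2 (by positivity)
  have heq : -(c * δ / π ^ 2) * (v * θ ^ 2) = (c*v/2) * (2*δ/π^2*θ^2) - c*v*(2*δ/π^2*θ^2) := by
    ring
  calc N / δ * t + -(c * v) * A ≤ (c*v/2) * A + -(c*v) * A := by linarith
    _ = -((c*v/2) * A) := by ring
    _ ≤ -((c*v/2) * (2*δ/π^2*θ^2)) := by linarith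
    _ = -(c * δ / π ^ 2) * (v * θ ^ 2) := by ring

-- (exp y - 1)/y → 1
lemma lim_exp : Tendsto (fun y : ℝ => (Real.exp y - 1)/y) (nhdsWithin 0 {(0:ℝ)}ᶜ) (nhds 1) := by
  have h := (Real.hasDerivAt_exp 0)
  rw [hasDerivAt_iff_tendsto_slope] at h
  simp only [Real.exp_zero] at h
  refine h.congr (fun y => ?_)
  simp [slope_def_field, div_eq_inv_mul]

-- sin y / y → 1
lemma lim_sin : Tendsto (fun y : ℝ => Real.sin y / y) (nhdsWithin 0 {(0:ℝ)}ᶜ) (nhds 1) := by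
  have h := (Real.hasDerivAt_sin 0)
  rw [hasDerivAt_iff_tendsto_slope] at h
  simp only [Real.sin_zero, Real.cos_zero] at h
  refine h.congr (fun y => ?_)
  simp [slope_def_field]

-- log y / (y-1) → 1 at 1
lemma lim_log : Tendsto (fun y : ℝ => Real.log y / (y - 1)) (nhdsWithin 1 {(1:ℝ)}ᶜ) (nhds 1) := by
  have h := (Real.hasDerivAt_log (one_ne_zero))
  rw [hasDerivAt_iff_tendsto_slope] at h
  simp only [Real.log_one, inv_one] at h
  refine h.congr (fun y => ?_)
  simp [slope_def_field]

-- eventually facts near 0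
lemma ev_cos_lt_one : ∀ᶠ x in nhdsWithin (0:ℝ) {(0:ℝ)}ᶜ, Real.cos x < 1 := by
  have hmem : Set.Ioo (-1:ℝ) 1 ∈ nhds (0:ℝ) := Ioo_mem_nhds (by norm_num) (by norm_num)
  filter_upwards [nhdsWithin_le_nhds hmem, self_mem_nhdsWithin] with x hx hne
  have hb : |x| ≤ π := by
    rw [abs_le]; constructor <;> nlinarith [hx.1, hx.2, Real.pi_gt_three]
  have := Real.cos_le_one_sub_mul_cos_sq hb
  have hx0 : x ≠ 0 := hne
  have : 0 < 2/π^2 * x^2 := by positivity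
  nlinarith [Real.cos_le_one_sub_mul_cos_sq hb]

-- (cos x - 1)/x^2 → -1/2
lemma lim_cos : Tendsto (fun x : ℝ => (Real.cos x - 1)/x^2) (nhdsWithin 0 {(0:ℝ)}ᶜ) (nhds (-(1/2))) := by
  have hhalf : Tendsto (fun x : ℝ => x/2) (nhdsWithin 0 {(0:ℝ)}ᶜ) (nhdsWithin 0 {(0:ℝ)}ᶜ) := by
    apply tendsto_nhdsWithin_of_tendsto_nhds_of_eventually_within
    · have h0 : Tendsto (fun x : ℝ => x/2) (nhds 0) (nhds 0) := by
        simpa using (continuous_id.div_const (2:ℝ)).tendsto 0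
      exact h0.mono_left nhdsWithin_le_nhds
    · filter_upwards [self_mem_nhdsWithin] with x hx
      simp only [Set.mem_compl_iff, Set.mem_singleton_iff] at hx ⊢
      intro h; exact hx (by linarith)
  have h1 : Tendsto (fun x : ℝ => Real.sin (x/2) / (x/2)) (nhdsWithin 0 {(0:ℝ)}ᶜ) (nhds 1) :=
    lim_sin.comp hhalf
  have h2 : Tendsto (fun x : ℝ => -(1/2) * (Real.sin (x/2) / (x/2))^2)
      (nhdsWithin 0 {(0:ℝ)}ᶜ) (nhds (-(1/2))) := by
    have := ((h1.mul h1).const_mul (-(1/2):ℝ))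
    simpa [pow_two] using this
  refine h2.congr' ?_
  filter_upwards [self_mem_nhdsWithin] with x hx
  have hx0 : x ≠ 0 := hx
  have hs : Real.sin (x/2)^2 = 1/2 - Real.cos x / 2 := by
    have := Real.sin_sq_eq_half_sub (x/2)
    rw [this]; ring_nf
  rw [div_pow, hs, div_pow]
  field_simp
  ring

lemma ev_cos_pos : ∀ᶠ x in nhdsWithin (0:ℝ) {(0:ℝ)}ᶜ, 0 < Real.cos x := by
  have hmem : Set.Ioo (-1:ℝ) 1 ∈ nhds (0:ℝ) := Ioo_mem_nhds (by norm_num) (by norm_num)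
  filter_upwards [nhdsWithin_le_nhds hmem] with x hx
  apply Real.cos_pos_of_mem_Ioo
  constructor <;> nlinarith [hx.1, hx.2, Real.pi_gt_three]

lemma lim_main {δ : ℝ} (hδ : 0 < δ) :
    Tendsto (fun x : ℝ => (Real.cos x ^ (-δ) - 1)/x^2) (nhdsWithin 0 {(0:ℝ)}ᶜ)
      (nhds (δ/2)) := by
  set t : ℝ → ℝ := fun x => -δ * Real.log (Real.cos x) with htdef
  have ev_t_pos : ∀ᶠ x in nhdsWithin (0:ℝ) {(0:ℝ)}ᶜ, 0 < t x := by
    filter_upwards [ev_cos_pos, ev_cos_lt_one] with x h0 h1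
    have : Real.log (Real.cos x) < 0 := Real.log_neg h0 h1
    simp only [htdef]; nlinarith
  have h_t0 : Tendsto t (nhdsWithin (0:ℝ) {(0:ℝ)}ᶜ) (nhds 0) := by
    have hcont : ContinuousAt (fun x : ℝ => -δ * Real.log (Real.cos x)) 0 := by
      apply ContinuousAt.mul continuousAt_const
      exact (Real.continuousAt_log (by norm_num)).comp Real.continuous_cos.continuousAt
    have h2 := hcont.tendsto.mono_left (nhdsWithin_le_nhds (s := {(0:ℝ)}ᶜ))
    simp only [Real.cos_zero, Real.log_one, mul_zero] at h2
    exact h2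
  have h_tcomp : Tendsto t (nhdsWithin (0:ℝ) {(0:ℝ)}ᶜ) (nhdsWithin 0 {(0:ℝ)}ᶜ) := by
    apply tendsto_nhdsWithin_of_tendsto_nhds_of_eventually_within _ h_t0
    filter_upwards [ev_t_pos] with x hx
    exact ne_of_gt hx
  have factor1 : Tendsto (fun x => (Real.exp (t x) - 1)/(t x)) (nhdsWithin (0:ℝ) {(0:ℝ)}ᶜ)
      (nhds 1) := lim_exp.comp h_tcomp
  have hcoscomp : Tendsto Real.cos (nhdsWithin (0:ℝ) {(0:ℝ)}ᶜ) (nhdsWithin 1 {(1:ℝ)}ᶜ) := by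
    apply tendsto_nhdsWithin_of_tendsto_nhds_of_eventually_within
    · simpa using (Real.continuous_cos.tendsto 0).mono_left nhdsWithin_le_nhds
    · filter_upwards [ev_cos_lt_one] with x hx
      exact ne_of_lt hx
  have factor2a : Tendsto (fun x => Real.log (Real.cos x)/(Real.cos x - 1))
      (nhdsWithin (0:ℝ) {(0:ℝ)}ᶜ) (nhds 1) := lim_log.comp hcoscomp
  have factor2 : Tendsto (fun x => t x / x^2) (nhdsWithin (0:ℝ) {(0:ℝ)}ᶜ) (nhds (δ/2)) := by
    have hmul := (factor2a.mul lim_cos).const_mul (-δ)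
    have : (-δ) * (1 * (-(1/2))) = δ/2 := by ring
    rw [this] at hmul
    refine hmul.congr' ?_
    filter_upwards [ev_cos_lt_one, ev_cos_pos] with x h1 h0
    have hne : Real.cos x - 1 ≠ 0 := by intro h; nlinarith
    simp only [htdef]
    field_simp
  have total := factor1.mul factor2
  rw [one_mul] at total
  refine total.congr' ?_
  filter_upwards [ev_cos_pos, ev_t_pos] with x h0 ht
  have hrw : Real.cos x ^ (-δ) = Real.exp (t x) := by
    rw [Real.rpow_def_of_pos h0, htdef]; ring_nf
  rw [hrw]
  field_simp

lemma lim_g {c δ N : ℝ} (hc : 0 < c) (hδ : 0 < δ) (s : ℝ) :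
    Tendsto (fun u : ℝ => Real.cos (s * (u ^ (δ/2))⁻¹) ^ (-N) *
      Real.exp (-(c * u ^ δ) * (Real.cos (s * (u ^ (δ/2))⁻¹) ^ (-δ) - 1))) atTop
      (nhds (Real.exp (-(c*δ/2) * s^2))) := by
  rcases eq_or_ne s 0 with rfl | hs
  · simp only [zero_mul, Real.cos_zero, Real.one_rpow, sub_self, mul_zero, Real.exp_zero,
      mul_one, ne_eq, zero_pow, OfNat.ofNat_ne_zero, not_false_eq_true]
    norm_num
  · set φ : ℝ → ℝ := fun u => s * (u ^ (δ/2))⁻¹ with hφdef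
    have hpow : Tendsto (fun u : ℝ => u ^ (δ/2)) atTop atTop :=
      tendsto_rpow_atTop (by positivity)
    have hφ0 : Tendsto φ atTop (nhds 0) := by
      have := hpow.inv_tendsto_atTop.const_mul s
      simpa using this
    have hφ : Tendsto φ atTop (nhdsWithin 0 {(0:ℝ)}ᶜ) := by
      apply tendsto_nhdsWithin_of_tendsto_nhds_of_eventually_within _ hφ0
      filter_upwards [eventually_gt_atTop (0:ℝ)] with u hu
      have : (0:ℝ) < u ^ (δ/2) := Real.rpow_pos_of_pos hu _
      simp only [hφdef, Set.mem_compl_iff, Set.mem_singleton_iff]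
      positivity
    have factor1 : Tendsto (fun u => Real.cos (φ u) ^ (-N)) atTop (nhds 1) := by
      have hcont : ContinuousAt (fun x : ℝ => Real.cos x ^ (-N)) 0 := by
        have h1 : ContinuousAt (fun y : ℝ => y ^ (-N)) (Real.cos 0) :=
          Real.continuousAt_rpow_const _ _ (Or.inl (by norm_num))
        exact h1.comp Real.continuous_cos.continuousAt
      have := hcont.tendsto.comp (hφ.mono_right nhdsWithin_le_nhds)
      simpa [Function.comp_def] using this
    have factor2 : Tendsto (fun u => (Real.cos (φ u) ^ (-δ) - 1)/(φ u)^2) atTop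
        (nhds (δ/2)) := (lim_main hδ).comp hφ
    have factor2' : Tendsto (fun u => Real.exp (-(c*s^2) * ((Real.cos (φ u) ^ (-δ) - 1)/(φ u)^2)))
        atTop (nhds (Real.exp (-(c*δ/2) * s^2))) := by
      have h := (Real.continuous_exp.tendsto _).comp (factor2.const_mul (-(c*s^2)))
      have heq : -(c*s^2) * (δ/2) = -(c*δ/2) * s^2 := by ring
      rwa [heq] at h
    have total := factor1.mul factor2'
    rw [one_mul] at total
    refine total.congr' ?_
    filter_upwards [eventually_gt_atTop (0:ℝ)] with u hu
    have hupow : (0:ℝ) < u ^ (δ/2) := Real.rpow_pos_of_pos hu _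
    have hsq : (φ u)^2 = s^2 / u ^ δ := by
      have : (u ^ (δ/2)) * (u ^ (δ/2)) = u ^ δ := by
        rw [← Real.rpow_add hu]; norm_num
      simp only [hφdef]
      field_simp
      nlinarith [this]
    congr 1
    congr 1
    rw [hsq]
    have hδpos : (0:ℝ) < u ^ δ := Real.rpow_pos_of_pos hu _
    simp only [hφdef]
    field_simp
lemma measure_eq {Ω : Type*} [MeasurableSpace Ω] (μ : Measure Ω) [IsProbabilityMeasure μ]
    (R Θ : Ω → ℝ) (hRmeas : Measurable R) (hΘmeas : Measurable Θ)
    (hIndep : ProbabilityTheory.IndepFun R Θ μ)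
    (hΘlaw : Measure.map Θ μ = (ENNReal.ofReal (2 * π))⁻¹ • volume.restrict (Set.Ioo (-π) π))
    (hRpos : ∀ ω, 0 < R ω)
    {C c δ N : ℝ} (hC : 0 < C) (hc : 0 < c) (hδ : 0 < δ)
    {x₀ u : ℝ}
    (htail : ∀ x, x₀ ≤ x → (μ {ω | x < R ω}).toReal = C * x ^ N * Real.exp (-c * x ^ δ))
    (hu0 : 0 < u) (hux : x₀ ≤ u) (hu2 : 2 * max (N/δ) 0 ≤ c * u ^ δ) :
    (μ {ω | u < R ω * Real.cos (Θ ω)}).toReal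
      = (2*π)⁻¹ * (C * u ^ N * Real.exp (-(c * u ^ δ))) *
        ∫ θ in Set.Ioo (-(π/2)) (π/2),
          Real.cos θ ^ (-N) * Real.exp (-(c * u ^ δ) * (Real.cos θ ^ (-δ) - 1)) := by
  set q : ℝ → ℝ := fun θ => Real.cos θ ^ (-N) * Real.exp (-(c * u ^ δ) * (Real.cos θ ^ (-δ) - 1))
    with hqdef
  set K : ℝ := C * u ^ N * Real.exp (-(c * u ^ δ)) with hKdef
  have hK0 : 0 ≤ K := by positivity
  have hq0 : ∀ θ ∈ Set.Ioo (-(π/2)) (π/2), 0 ≤ q θ := by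
    intro θ hθ
    have hc0 : 0 < Real.cos θ := Real.cos_pos_of_mem_Ioo (by simpa using hθ)
    have := Real.rpow_nonneg hc0.le (-N)
    have := Real.exp_pos (-(c * u ^ δ) * (Real.cos θ ^ (-δ) - 1))
    simp only [hqdef]
    positivity
  have hqmeas : Measurable q := by fun_prop
  have hq1 : ∀ θ ∈ Set.Ioo (-(π/2)) (π/2), q θ ≤ 1 := by
    intro θ hθ
    refine le_trans (key_bound hc hδ hθ hu2) ?_
    rw [Real.exp_le_one_iff]
    have : (0:ℝ) < u ^ δ := Real.rpow_pos_of_pos hu0 _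
    have hπ : (0:ℝ) < π := Real.pi_pos
    have h1 : 0 ≤ (c * δ / π ^ 2) * (u ^ δ * θ ^ 2) := by positivity
    linarith
  -- the set in the product space
  have hfm : Measurable (fun p : ℝ × ℝ => p.2 * Real.cos p.1) :=
    measurable_snd.mul (Real.measurable_cos.comp measurable_fst)
  have hS : MeasurableSet {p : ℝ × ℝ | u < p.2 * Real.cos p.1} :=
    measurableSet_lt measurable_const hfm
  have hmap : μ.map (fun ω => (Θ ω, R ω)) = (μ.map Θ).prod (μ.map R) :=
    (ProbabilityTheory.indepFun_iff_map_prod_eq_prod_map_map hΘmeas.aemeasurable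
      hRmeas.aemeasurable).1 hIndep.symm
  have h1 : μ {ω | u < R ω * Real.cos (Θ ω)}
      = ((μ.map Θ).prod (μ.map R)) {p : ℝ × ℝ | u < p.2 * Real.cos p.1} := by
    rw [← hmap, Measure.map_apply (hΘmeas.prodMk hRmeas) hS]
    rfl
  have h2 : ((μ.map Θ).prod (μ.map R)) {p : ℝ × ℝ | u < p.2 * Real.cos p.1}
      = ∫⁻ θ, (μ.map R) {r | u < r * Real.cos θ} ∂(μ.map Θ) := by
    rw [Measure.prod_apply hS]
    rfl
  -- pointwise identification of the inner measure
  have claim : ∀ θ ∈ Set.Ioo (-π) π, (μ.map R) {r | u < r * Real.cos θ}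
      = (Set.Ioo (-(π/2)) (π/2)).indicator (fun θ => ENNReal.ofReal (K * q θ)) θ := by
    intro θ hθ
    have hsetm : MeasurableSet {r : ℝ | u < r * Real.cos θ} :=
      measurableSet_lt measurable_const (measurable_id.mul_const _)
    by_cases hmem : θ ∈ Set.Ioo (-(π/2)) (π/2)
    · have hc0 : 0 < Real.cos θ := Real.cos_pos_of_mem_Ioo (by simpa using hmem)
      have hc1 : Real.cos θ ≤ 1 := Real.cos_le_one θ
      have hset : {r : ℝ | u < r * Real.cos θ} = Set.Ioi (u / Real.cos θ) := by
        ext r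
        simp only [Set.mem_setOf_eq, Set.mem_Ioi]
        rw [div_lt_iff₀ hc0]
      have hxle : x₀ ≤ u / Real.cos θ := by
        refine le_trans hux ?_
        rw [le_div_iff₀ hc0]
        nlinarith
      have hval := htail _ hxle
      rw [hset, Measure.map_apply hRmeas measurableSet_Ioi,
        Set.indicator_of_mem hmem]
      have hpre : R ⁻¹' Set.Ioi (u / Real.cos θ) = {ω | u / Real.cos θ < R ω} := rfl
      rw [hpre, ← ENNReal.ofReal_toReal (measure_ne_top μ _), hval]
      congr 1
      -- algebra
      have e1 : (u / Real.cos θ) ^ N = u ^ N * Real.cos θ ^ (-N) := by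
        rw [div_eq_mul_inv, Real.mul_rpow hu0.le (inv_nonneg.2 hc0.le),
          ← Real.rpow_neg_one (Real.cos θ), ← Real.rpow_mul hc0.le]
        norm_num
      have e2 : (u / Real.cos θ) ^ δ = u ^ δ * Real.cos θ ^ (-δ) := by
        rw [div_eq_mul_inv, Real.mul_rpow hu0.le (inv_nonneg.2 hc0.le),
          ← Real.rpow_neg_one (Real.cos θ), ← Real.rpow_mul hc0.le]
        norm_num
      rw [e1, e2]
      have e3 : -c * (u ^ δ * Real.cos θ ^ (-δ))
          = -(c * u ^ δ) * (Real.cos θ ^ (-δ) - 1) + -(c * u ^ δ) := by ring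
      rw [e3, Real.exp_add, hqdef, hKdef]
      ring
    · rw [Set.indicator_of_notMem hmem]
      have hcosle : Real.cos θ ≤ 0 := by
        simp only [Set.mem_Ioo, not_and_or, not_lt] at hmem
        rcases hmem with h | h
        · rw [← Real.cos_neg]
          apply Real.cos_nonpos_of_pi_div_two_le_of_le (by linarith)
          have := hθ.1
          nlinarith [Real.pi_pos]
        · apply Real.cos_nonpos_of_pi_div_two_le_of_le h
          have := hθ.2
          nlinarith [Real.pi_pos]
      rw [Measure.map_apply hRmeas hsetm]
      convert measure_empty (μ := μ)
      · ext ω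
        simp only [Set.mem_preimage, Set.mem_setOf_eq, Set.mem_empty_iff_false, iff_false,
          not_lt]
        have := hRpos ω
        nlinarith
  -- put things together
  have hIoosub : Set.Ioo (-(π/2)) (π/2) ⊆ Set.Ioo (-π) π := by
    apply Set.Ioo_subset_Ioo <;> nlinarith [Real.pi_pos]
  have h3 : ∫⁻ θ, (μ.map R) {r | u < r * Real.cos θ} ∂(μ.map Θ)
      = (ENNReal.ofReal (2 * π))⁻¹ *
        ∫⁻ θ in Set.Ioo (-(π/2)) (π/2), ENNReal.ofReal (K * q θ) := by
    rw [hΘlaw, lintegral_smul_measure]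
    congr 1
    rw [setLIntegral_congr_fun measurableSet_Ioo claim,
      lintegral_indicator measurableSet_Ioo, Measure.restrict_restrict measurableSet_Ioo,
      Set.inter_eq_self_of_subset_left hIoosub]
  have hint : IntegrableOn (fun θ => K * q θ) (Set.Ioo (-(π/2)) (π/2)) volume := by
    apply Measure.integrableOn_of_bounded (M := K)
    · exact ((measure_Ioo_lt_top).ne)
    · exact ((hqmeas.const_mul K).aestronglyMeasurable)
    · filter_upwards [ae_restrict_mem measurableSet_Ioo] with θ hθ
      rw [Real.norm_eq_abs, abs_of_nonneg (mul_nonneg hK0 (hq0 θ hθ))]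
      nlinarith [hq1 θ hθ, hq0 θ hθ]
  have h4 : ∫⁻ θ in Set.Ioo (-(π/2)) (π/2), ENNReal.ofReal (K * q θ)
      = ENNReal.ofReal (∫ θ in Set.Ioo (-(π/2)) (π/2), K * q θ) := by
    rw [ofReal_integral_eq_lintegral_ofReal hint]
    filter_upwards [ae_restrict_mem measurableSet_Ioo] with θ hθ
    exact mul_nonneg hK0 (hq0 θ hθ)
  have hIntnn : 0 ≤ ∫ θ in Set.Ioo (-(π/2)) (π/2), K * q θ :=
    setIntegral_nonneg measurableSet_Ioo (fun θ hθ => mul_nonneg hK0 (hq0 θ hθ))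
  rw [h1, h2, h3, h4, ENNReal.toReal_mul, ENNReal.toReal_inv, ENNReal.toReal_ofReal hIntnn,
    ENNReal.toReal_ofReal (by positivity : (0:ℝ) ≤ 2*π)]
  rw [MeasureTheory.integral_const_mul]
  ring

lemma cov (q : ℝ → ℝ) {ε b : ℝ} (hε : 0 < ε) (hb : 0 < b) :
    ∫ s : ℝ, (Set.Ioo (-(b/ε)) (b/ε)).indicator (fun s => q (s * ε)) s
      = ε⁻¹ * ∫ θ in Set.Ioo (-b) b, q θ := by
  have h := MeasureTheory.Measure.integral_comp_mul_right ((Set.Ioo (-b) b).indicator q) ε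
  rw [integral_indicator measurableSet_Ioo] at h
  have heq : ∀ s : ℝ, (Set.Ioo (-(b/ε)) (b/ε)).indicator (fun s => q (s * ε)) s
      = (Set.Ioo (-b) b).indicator q (s * ε) := by
    intro s
    rw [Set.indicator_apply, Set.indicator_apply]
    have hiff : s ∈ Set.Ioo (-(b/ε)) (b/ε) ↔ s * ε ∈ Set.Ioo (-b) b := by
      simp only [Set.mem_Ioo]
      constructor
      · rintro ⟨h1, h2⟩
        refine ⟨?_, ?_⟩
        · rw [show -(b/ε) = (-b)/ε by ring, div_lt_iff₀ hε] at h1; linarith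
        · rwa [lt_div_iff₀ hε] at h2
      · rintro ⟨h1, h2⟩
        refine ⟨?_, ?_⟩
        · rw [show -(b/ε) = (-b)/ε by ring, div_lt_iff₀ hε]; linarith
        · rwa [lt_div_iff₀ hε]
    by_cases hmem : s ∈ Set.Ioo (-(b/ε)) (b/ε)
    · rw [if_pos hmem, if_pos (hiff.1 hmem)]
    · rw [if_neg hmem, if_neg (fun hh => hmem (hiff.2 hh))]
  calc ∫ s : ℝ, (Set.Ioo (-(b/ε)) (b/ε)).indicator (fun s => q (s * ε)) s
      = ∫ s : ℝ, (Set.Ioo (-b) b).indicator q (s * ε) := by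
        congr 1; ext s; exact heq s
    _ = |ε⁻¹| • ∫ θ in Set.Ioo (-b) b, q θ := h
    _ = ε⁻¹ * ∫ θ in Set.Ioo (-b) b, q θ := by
        rw [abs_of_pos (inv_pos.2 hε), smul_eq_mul]

lemma lim_J {c δ N : ℝ} (hc : 0 < c) (hδ : 0 < δ) :
    Tendsto (fun u : ℝ => ∫ s : ℝ,
      (Set.Ioo (-(π/2 * u ^ (δ/2))) (π/2 * u ^ (δ/2))).indicator
        (fun s => Real.cos (s * (u ^ (δ/2))⁻¹) ^ (-N) *
          Real.exp (-(c * u ^ δ) * (Real.cos (s * (u ^ (δ/2))⁻¹) ^ (-δ) - 1))) s)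
      atTop (nhds (Real.sqrt (2*π/(c*δ)))) := by
  have hπ : (0:ℝ) < π := Real.pi_pos
  have hcu : Tendsto (fun u : ℝ => c * u ^ δ) atTop atTop :=
    (tendsto_rpow_atTop hδ).const_mul_atTop hc
  have hb : (0:ℝ) < c * δ / π ^ 2 := by positivity
  have key := MeasureTheory.tendsto_integral_filter_of_dominated_convergence
    (μ := (volume : Measure ℝ)) (l := (atTop : Filter ℝ))
    (F := fun u s => (Set.Ioo (-(π/2 * u ^ (δ/2))) (π/2 * u ^ (δ/2))).indicator
        (fun s => Real.cos (s * (u ^ (δ/2))⁻¹) ^ (-N) *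
          Real.exp (-(c * u ^ δ) * (Real.cos (s * (u ^ (δ/2))⁻¹) ^ (-δ) - 1))) s)
    (f := fun s => Real.exp (-(c*δ/2) * s^2))
    (bound := fun s => Real.exp (-(c*δ/π^2) * s^2))
    ?_ ?_ ?_ ?_
  · have hgauss : ∫ s : ℝ, Real.exp (-(c*δ/2) * s^2) = Real.sqrt (2*π/(c*δ)) := by
      rw [integral_gaussian (c*δ/2)]
      congr 1
      field_simp
    rwa [hgauss] at key
  · -- measurability
    filter_upwards with u
    exact (Measurable.indicator (by fun_prop) measurableSet_Ioo).aestronglyMeasurable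
  · -- bound
    filter_upwards [eventually_gt_atTop (0:ℝ), hcu.eventually_ge_atTop (2 * max (N/δ) 0)]
      with u hu0 hu2
    filter_upwards with s
    set ε : ℝ := (u ^ (δ/2))⁻¹ with hεdef
    have hup : (0:ℝ) < u ^ (δ/2) := Real.rpow_pos_of_pos hu0 _
    have hε : 0 < ε := inv_pos.2 hup
    have hsq : (u ^ (δ/2)) * (u ^ (δ/2)) = u ^ δ := by
      rw [← Real.rpow_add hu0]; norm_num
    by_cases hmem : s ∈ Set.Ioo (-(π/2 * u ^ (δ/2))) (π/2 * u ^ (δ/2))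
    · rw [Set.indicator_of_mem hmem]
      have hθmem : s * ε ∈ Set.Ioo (-(π/2)) (π/2) := by
        simp only [Set.mem_Ioo] at hmem ⊢
        have hεu : ε * (u ^ (δ/2)) = 1 := inv_mul_cancel₀ hup.ne'
        constructor
        · nlinarith [hmem.1]
        · nlinarith [hmem.2]
      have hcth : 0 < Real.cos (s * ε) := Real.cos_pos_of_mem_Ioo (by simpa using hθmem)
      have hval0 : 0 ≤ Real.cos (s * ε) ^ (-N) *
          Real.exp (-(c * u ^ δ) * (Real.cos (s * ε) ^ (-δ) - 1)) := by
        have := Real.rpow_nonneg hcth.le (-N)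
        positivity
      rw [Real.norm_eq_abs, abs_of_nonneg hval0]
      refine le_trans (key_bound hc hδ hθmem hu2) ?_
      apply Real.exp_le_exp.2
      have heq : u ^ δ * (s * ε)^2 = s^2 := by
        have : ε^2 * u ^ δ = 1 := by
          rw [← hsq, hεdef]
          field_simp
        nlinarith [this]
      rw [heq]
    · rw [Set.indicator_of_notMem hmem]
      simp only [norm_zero]
      positivity
  · -- integrable bound
    exact integrable_exp_neg_mul_sq hb
  · -- pointwise limit
    filter_upwards with s
    have haT : Tendsto (fun u : ℝ => π/2 * u ^ (δ/2)) atTop atTop :=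
      (tendsto_rpow_atTop (by positivity)).const_mul_atTop (by positivity)
    refine (lim_g hc hδ s (N := N)).congr' ?_
    filter_upwards [haT.eventually_gt_atTop |s|] with u hu
    rw [Set.indicator_of_mem]
    simp only [Set.mem_Ioo]
    constructor
    · have := abs_lt.1 hu
      linarith [this.1]
    · linarith [(abs_lt.1 hu).2]

end helpers

open Real in
theorem stmt16
    {Ω : Type*} [MeasurableSpace Ω] (μ : Measure Ω) [IsProbabilityMeasure μ]
    (R Θ : Ω → ℝ) (hRmeas : Measurable R) (hΘmeas : Measurable Θ)
    (hIndep : ProbabilityTheory.IndepFun R Θ μ)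
    (hΘlaw : Measure.map Θ μ =
      (ENNReal.ofReal (2 * Real.pi))⁻¹ • volume.restrict (Set.Ioo (-Real.pi) Real.pi))
    (hRpos : ∀ ω : Ω, 0 < R ω)
    (C c δ N : ℝ) (hC : 0 < C) (hc : 0 < c) (hδ : 0 < δ)
    (hRtail : ∀ᶠ x in atTop, (μ {ω | x < R ω}).toReal = C * x ^ N * Real.exp (-c * x ^ δ)) :
    Tendsto (fun u => (μ {ω | u < R ω * Real.cos (Θ ω)}).toReal *
        Real.sqrt (2 * c * δ * Real.pi) * u ^ (δ / 2 - N) * Real.exp (c * u ^ δ) / C)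
      atTop (nhds 1) := by
  obtain ⟨x₀, htail⟩ := eventually_atTop.1 hRtail
  have hπ : (0:ℝ) < π := Real.pi_pos
  have hcu : Tendsto (fun u : ℝ => c * u ^ δ) atTop atTop :=
    (tendsto_rpow_atTop hδ).const_mul_atTop hc
  have hconst : Real.sqrt (2*c*δ*π) / (2*π) * Real.sqrt (2*π/(c*δ)) = 1 := by
    rw [div_mul_eq_mul_div, ← Real.sqrt_mul (by positivity)]
    have h1 : 2*c*δ*π * (2*π/(c*δ)) = (2*π)^2 := by field_simp
    rw [h1, Real.sqrt_sq (by positivity)]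
    field_simp
  have hlim : Tendsto (fun u : ℝ => Real.sqrt (2*c*δ*π) / (2*π) * ∫ s : ℝ,
      (Set.Ioo (-(π/2 * u ^ (δ/2))) (π/2 * u ^ (δ/2))).indicator
        (fun s => Real.cos (s * (u ^ (δ/2))⁻¹) ^ (-N) *
          Real.exp (-(c * u ^ δ) * (Real.cos (s * (u ^ (δ/2))⁻¹) ^ (-δ) - 1))) s)
      atTop (nhds 1) := by
    have := (lim_J (N := N) hc hδ).const_mul (Real.sqrt (2*c*δ*π) / (2*π))
    rwa [hconst] at this
  refine hlim.congr' ?_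
  filter_upwards [eventually_ge_atTop x₀, eventually_gt_atTop (0:ℝ),
    hcu.eventually_ge_atTop (2 * max (N/δ) 0)] with u hux hu0 hu2
  have hme := measure_eq μ R Θ hRmeas hΘmeas hIndep hΘlaw hRpos hC hc hδ htail hu0 hux hu2
  have hup : (0:ℝ) < u ^ (δ/2) := Real.rpow_pos_of_pos hu0 _
  have hε : (0:ℝ) < (u ^ (δ/2))⁻¹ := inv_pos.2 hup
  have hcov := cov (q := fun θ => Real.cos θ ^ (-N) *
      Real.exp (-(c * u ^ δ) * (Real.cos θ ^ (-δ) - 1)))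
    (ε := (u ^ (δ/2))⁻¹) (b := π/2) hε (by positivity)
  have hbe : π/2/((u ^ (δ/2))⁻¹ : ℝ) = π/2 * u ^ (δ/2) := by
    field_simp
  rw [hbe, inv_inv] at hcov
  have hJu : (∫ s : ℝ,
      (Set.Ioo (-(π/2 * u ^ (δ/2))) (π/2 * u ^ (δ/2))).indicator
        (fun s => Real.cos (s * (u ^ (δ/2))⁻¹) ^ (-N) *
          Real.exp (-(c * u ^ δ) * (Real.cos (s * (u ^ (δ/2))⁻¹) ^ (-δ) - 1))) s)
      = u ^ (δ/2) * ∫ θ in Set.Ioo (-(π/2)) (π/2),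
          Real.cos θ ^ (-N) * Real.exp (-(c * u ^ δ) * (Real.cos θ ^ (-δ) - 1)) := hcov
  rw [hJu, hme]
  have hupow : u ^ N * u ^ (δ/2 - N) = u ^ (δ/2) := by
    rw [← Real.rpow_add hu0]
    ring_nf
  set I : ℝ := ∫ θ in Set.Ioo (-(π/2)) (π/2),
      Real.cos θ ^ (-N) * Real.exp (-(c * u ^ δ) * (Real.cos θ ^ (-δ) - 1)) with hI
  rw [Real.exp_neg]
  rw [← hupow]
  field_simp
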